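/- Fix k ≥ 0 and let μ, m, δ_k, δ̃_k ≥ 0, A_k ≥ 0, α_{k+1} > 0, L_{k+1} > 0 with A_{k+1} := A_k + α_{k+1} satisfying A_{k+1}·(1 + A_k·μ + A_k·m) = L_{k+1}·α_{k+1}². Let x_k, u_k ∈ Q, y_{k+1} := (α_{k+1}·u_k + A_k·x_k)/A_{k+1}, let ψ : E → ℝ be convex with ψ(y_{k+1}) = 0 and m-strongly convex relative to d, and let c ∈ ℝ be such that: (a) μ·V[y_{k+1}](x) ≤ f(x) − c − ψ(x) for all x ∈ Q; (b) u_{k+1} ∈ Q is a δ̃_k-approximate minimizer of x ↦ α_{k+1}·ψ(x) + (1 + A_k·μ + A_k·m)·V[u_k](x) + α_{k+1}·μ·V[y_{k+1}](x) on Q; (c) x_{k+1} := (α_{k+1}·u_{k+1} + A_k·x_k)/A_{k+1}; (d) there is c⁺ ∈ ℝ with f(x_{k+1}) ≤ c⁺ + δ_k and c⁺ ≤ c + ψ(x_{k+1}) + (L_{k+1}/2)·‖x_{k+1} − y_{k+1}‖² + δ_k; and (e) d is 1-strongly convex with respect to the norm ‖·‖, i.e. V[y](x) ≥ (1/2)·‖x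 − y‖² for all x, y ∈ Q. Then for all x ∈ Q: A_{k+1}·f(x_{k+1}) − A_k·f(x_k) + (1 + A_{k+1}·μ + A_{k+1}·m)·V[u_{k+1}](x) − (1 + A_k·μ + A_k·m)·V[u_k](x) ≤ α_{k+1}·f(x) + 2·δ_k·A_{k+1} + δ̃_k. -/

import Mathlib

open RealInnerProductSpace Finset

/-- The Bregman divergence `V[y](x) = d(x) - d(y) - ⟪∇d(y), x - y⟫` generated by `d`
with gradient map `Dd`. -/
noncomputable def breg {E : Type*} [NormedAddCommGroup E] [InnerProductSpace ℝ E]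
    (d : E → ℝ) (Dd : E → E) (y x : E) : ℝ :=
  d x - d y - ⟪Dd y, x - y⟫

/-- `g` is a subgradient of `ψ` at `z` (relative to the set `Q`). -/
def IsSubgradOn {E : Type*} [NormedAddCommGroup E] [InnerProductSpace ℝ E]
    (Q : Set E) (ψ : E → ℝ) (z g : E) : Prop :=
  ∀ x ∈ Q, ψ z + ⟪g, x - z⟫ ≤ ψ x

/-- `ψ` is `m`-strongly convex relative to `d` on `Q`, where `V` is the Bregman
divergence generated by `d`. -/
def StrongRelConvexOn {E : Type*} [NormedAddCommGroup E] [InnerProductSpace ℝ E]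
    (Q : Set E) (V : E → E → ℝ) (m : ℝ) (ψ : E → ℝ) : Prop :=
  ∀ z ∈ Q, ∀ g : E, IsSubgradOn Q ψ z g → ∀ x ∈ Q, ψ z + ⟪g, x - z⟫ + m * V z x ≤ ψ x

/-- `y` is a `δ`-approximate minimizer of `Ψ` on `Q`: there exists a subgradient `h`
of `Ψ` at `y` such that `⟪h, x - y⟫ ≥ -δ` for all `x ∈ Q`. -/
def IsApproxMinOn {E : Type*} [NormedAddCommGroup E] [InnerProductSpace ℝ E]
    (Q : Set E) (Ψ : E → ℝ) (δ : ℝ) (y : E) : Prop :=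
  y ∈ Q ∧ ∃ h : E, IsSubgradOn Q Ψ y h ∧ ∀ x ∈ Q, -δ ≤ ⟪h, x - y⟫

section Aux

open Filter Topology

variable {E : Type*} [NormedAddCommGroup E] [InnerProductSpace ℝ E]

/-- The three-point identity for Bregman divergences. -/
lemma breg_three (d : E → ℝ) (Dd : E → E) (z u x : E) :
    breg d Dd z x = breg d Dd z u + ⟪Dd u - Dd z, x - u⟫ + breg d Dd u x := by
  simp [breg, inner_sub_left, inner_sub_right]; ring

/-- Extraction of a subgradient of `ψ` from a subgradient of `x ↦ a ψ x + s d x + ⟪v, x⟫`. -/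
lemma extract_subgrad [CompleteSpace E]
    (Q : Set E) (hQ : Convex ℝ Q) (d : E → ℝ) (Dd : E → E)
    (hd_diff : ∀ x, HasGradientAt d (Dd x) x)
    (ψ : E → ℝ) (hψ : ConvexOn ℝ Q ψ)
    (a s : ℝ) (ha : 0 < a) (v u : E) (hu : u ∈ Q) (h : E)
    (hh : ∀ x ∈ Q, a * ψ u + s * d u + ⟪v, u⟫ + ⟪h, x - u⟫ ≤ a * ψ x + s * d x + ⟪v, x⟫) :
    ∀ x ∈ Q, a * ψ u + ⟪h - (v + s • Dd u), x - u⟫ ≤ a * ψ x := by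
  intro x hx
  have hinner : ⟪h - (v + s • Dd u), x - u⟫
      = ⟪h, x - u⟫ - ⟪v, x - u⟫ - s * ⟪Dd u, x - u⟫ := by
    simp [inner_sub_left, inner_add_left, real_inner_smul_left]; ring
  rw [hinner]
  have hφ : HasDerivAt (fun t : ℝ => d (u + t • (x - u))) ⟪Dd u, x - u⟫ 0 := by
    have hc : HasDerivAt (fun t : ℝ => u + t • (x - u)) (x - u) 0 := by
      simpa using ((hasDerivAt_id (0:ℝ)).smul_const (x - u)).const_add u
    have hf := (hd_diff u).hasFDerivAt
    rw [show u = u + (0:ℝ) • (x - u) by simp] at hf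
    have h3 := hf.comp_hasDerivAt (x := (0:ℝ)) hc
    simp only [zero_smul, add_zero, InnerProductSpace.toDual_apply_apply] at h3
    exact h3
  have hslope : Tendsto (fun t : ℝ => (d (u + t • (x - u)) - d u) / t)
      (𝓝[>] (0:ℝ)) (𝓝 ⟪Dd u, x - u⟫) := by
    have := hasDerivAt_iff_tendsto_slope.mp hφ
    have h2 := this.mono_left (nhdsWithin_mono _ (by
      intro t ht; exact ne_of_gt ht : Set.Ioi (0:ℝ) ⊆ {(0:ℝ)}ᶜ))
    refine h2.congr (fun t => ?_)
    simp [slope_def_field]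
  have hev : ∀ᶠ t in 𝓝[>] (0:ℝ),
      ⟪h, x - u⟫ - ⟪v, x - u⟫ - s * ((d (u + t • (x - u)) - d u) / t)
        ≤ a * ψ x - a * ψ u := by
    filter_upwards [Ioo_mem_nhdsGT_of_mem
      (by constructor <;> norm_num : (0:ℝ) ∈ Set.Ico (0:ℝ) 1)] with t ht
    obtain ⟨ht0, ht1⟩ := ht
    set xt := u + t • (x - u) with hxt
    have hcomb : xt = (1 - t) • u + t • x := by rw [hxt]; module
    have hxtQ : xt ∈ Q := by
      rw [hcomb]; exact hQ hu hx (by linarith) (le_of_lt ht0) (by ring)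
    have h1 := hh xt hxtQ
    have hψt : ψ xt ≤ (1 - t) * ψ u + t * ψ x := by
      rw [hcomb]; exact hψ.2 hu hx (by linarith) (le_of_lt ht0) (by ring)
    have hi1 : ⟪h, xt - u⟫ = t * ⟪h, x - u⟫ := by
      rw [hxt]; simp [real_inner_smul_right]
    have hi2 : ⟪v, xt⟫ = ⟪v, u⟫ + t * ⟪v, x - u⟫ := by
      rw [hxt]; simp [inner_add_right, real_inner_smul_right]
    have key : t * (⟪h, x - u⟫ - ⟪v, x - u⟫) - s * (d xt - d u)
        ≤ t * (a * ψ x - a * ψ u) := by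
      nlinarith [h1, hψt, hi1, hi2]
    have hmul : t * (⟪h, x - u⟫ - ⟪v, x - u⟫ - s * ((d xt - d u) / t))
        ≤ t * (a * ψ x - a * ψ u) := by
      have : t * (s * ((d xt - d u) / t)) = s * (d xt - d u) := by field_simp
      linarith [key, this]
    exact le_of_mul_le_mul_left (by linarith) ht0
  have hlim : Tendsto
      (fun t : ℝ => ⟪h, x - u⟫ - ⟪v, x - u⟫ - s * ((d (u + t • (x - u)) - d u) / t))
      (𝓝[>] (0:ℝ)) (𝓝 (⟪h, x - u⟫ - ⟪v, x - u⟫ - s * ⟪Dd u, x - u⟫)) :=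
    tendsto_const_nhds.sub (hslope.const_mul s)
  have := le_of_tendsto hlim hev
  linarith

end Aux

set_option maxHeartbeats 1000000 in
/-- Lemma 3.7: the key per-iteration inequality of the fast adaptive gradient
method with an inexact `(δ, L, μ, m, V, ‖·‖)`-model. -/
theorem stmt6
    {E : Type*} [NormedAddCommGroup E] [InnerProductSpace ℝ E] [FiniteDimensional ℝ E]
    (Q : Set E) (hQ : Convex ℝ Q)
    (d : E → ℝ) (Dd : E → E)
    (hd_conv : ConvexOn ℝ Set.univ d) (hd_diff : ∀ x, HasGradientAt d (Dd x) x)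
    (f : E → ℝ) (μ m δk δtk : ℝ)
    (hμ : 0 ≤ μ) (hm : 0 ≤ m) (hδk : 0 ≤ δk) (hδtk : 0 ≤ δtk)
    (A α Lc : ℝ) (hA : 0 ≤ A) (hα : 0 < α) (hLc : 0 < Lc)
    (hquad : (A + α) * (1 + A * μ + A * m) = Lc * α ^ 2)
    (xk uk : E) (hxk : xk ∈ Q) (huk : uk ∈ Q)
    (ynext : E) (hynext : ynext = (A + α)⁻¹ • (α • uk + A • xk))
    (ψ : E → ℝ) (hψ_conv : ConvexOn ℝ Q ψ) (hψ0 : ψ ynext = 0)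
    (hψ_strong : StrongRelConvexOn Q (breg d Dd) m ψ)
    (c : ℝ)
    (ha : ∀ x ∈ Q, μ * breg d Dd ynext x ≤ f x - c - ψ x)
    (unext : E)
    (hb : IsApproxMinOn Q
      (fun x => α * ψ x + (1 + A * μ + A * m) * breg d Dd uk x + α * μ * breg d Dd ynext x)
      δtk unext)
    (xnext : E) (hxnext : xnext = (A + α)⁻¹ • (α • unext + A • xk))
    (hcd : ∃ cp : ℝ, f xnext ≤ cp + δk ∧
      cp ≤ c + ψ xnext + Lc / 2 * ‖xnext - ynext‖ ^ 2 + δk)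
    (hsc : ∀ x ∈ Q, ∀ y ∈ Q, 1 / 2 * ‖x - y‖ ^ 2 ≤ breg d Dd y x) :
    ∀ x ∈ Q,
      (A + α) * f xnext - A * f xk
          + (1 + (A + α) * μ + (A + α) * m) * breg d Dd unext x
          - (1 + A * μ + A * m) * breg d Dd uk x
        ≤ α * f x + 2 * δk * (A + α) + δtk := by
  intro x hx
  obtain ⟨huQ, h, hsub, hδ⟩ := hb
  obtain ⟨cp, hc1, hc2⟩ := hcd
  have hAp : 0 < A + α := by linarith
  have w1 : 0 ≤ (A + α)⁻¹ * α := by positivity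
  have w2 : 0 ≤ (A + α)⁻¹ * A := mul_nonneg (by positivity) hA
  have hsum : (A + α)⁻¹ * α + (A + α)⁻¹ * A = 1 := by field_simp; ring
  have hyc : ynext = ((A + α)⁻¹ * α) • uk + ((A + α)⁻¹ * A) • xk := by rw [hynext]; module
  have hxc : xnext = ((A + α)⁻¹ * α) • unext + ((A + α)⁻¹ * A) • xk := by rw [hxnext]; module
  have hyQ : ynext ∈ Q := by rw [hyc]; exact hQ huk hxk w1 w2 hsum
  -- convert the subgradient of the composite objective into the canonical form
  have hh : ∀ x' ∈ Q,
      α * ψ unext + (1 + A * μ + A * m + α * μ) * d unext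
        + ⟪-((1 + A * μ + A * m) • Dd uk + (α * μ) • Dd ynext), unext⟫
        + ⟪h, x' - unext⟫
      ≤ α * ψ x' + (1 + A * μ + A * m + α * μ) * d x'
        + ⟪-((1 + A * μ + A * m) • Dd uk + (α * μ) • Dd ynext), x'⟫ := by
    intro x' hx'
    have h1 := hsub x' hx'
    simp only [breg] at h1
    simp only [inner_sub_right, inner_neg_left, inner_add_left, real_inner_smul_left] at h1 ⊢
    ring_nf at h1 ⊢
    linarith
  have hgs := extract_subgrad Q hQ d Dd hd_diff ψ hψ_conv α (1 + A * μ + A * m + α * μ) hα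
    (-((1 + A * μ + A * m) • Dd uk + (α * μ) • Dd ynext)) unext huQ h hh
  have hvw : h - (-((1 + A * μ + A * m) • Dd uk + (α * μ) • Dd ynext)
        + (1 + A * μ + A * m + α * μ) • Dd unext)
      = h - ((1 + A * μ + A * m) • (Dd unext - Dd uk) + (α * μ) • (Dd unext - Dd ynext)) := by
    module
  set w := (1 + A * μ + A * m) • (Dd unext - Dd uk) + (α * μ) • (Dd unext - Dd ynext) with hwdef
  rw [hvw] at hgs
  have hg : IsSubgradOn Q ψ unext (α⁻¹ • (h - w)) := by
    intro x' hx'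
    have h1 := hgs x' hx'
    have h2 : ⟪α⁻¹ • (h - w), x' - unext⟫ = α⁻¹ * ⟪h - w, x' - unext⟫ :=
      real_inner_smul_left _ _ _
    rw [h2]
    have h3 : α * (α⁻¹ * ⟪h - w, x' - unext⟫) = ⟪h - w, x' - unext⟫ := by
      field_simp
    have h4 : α * (ψ unext + α⁻¹ * ⟪h - w, x' - unext⟫) ≤ α * ψ x' := by
      nlinarith [h1, h3]
    exact le_of_mul_le_mul_left h4 hα
  have hstr := hψ_strong unext huQ _ hg x hx
  have hstr' : α * ψ unext + ⟪h - w, x - unext⟫ + α * m * breg d Dd unext x ≤ α * ψ x := by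
    have h4 := mul_le_mul_of_nonneg_left hstr hα.le
    have h5 : α * ⟪α⁻¹ • (h - w), x - unext⟫ = ⟪h - w, x - unext⟫ := by
      rw [real_inner_smul_left]; field_simp
    nlinarith [h4, h5]
  -- key per-step inequality
  have tp1 : (1 + A * μ + A * m) * breg d Dd uk x
      = (1 + A * μ + A * m) * (breg d Dd uk unext + ⟪Dd unext - Dd uk, x - unext⟫
          + breg d Dd unext x) := by
    rw [← breg_three]
  have tp2 : (α * μ) * breg d Dd ynext x
      = (α * μ) * (breg d Dd ynext unext + ⟪Dd unext - Dd ynext, x - unext⟫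
          + breg d Dd unext x) := by
    rw [← breg_three]
  have hwx : ⟪w, x - unext⟫ = (1 + A * μ + A * m) * ⟪Dd unext - Dd uk, x - unext⟫
      + (α * μ) * ⟪Dd unext - Dd ynext, x - unext⟫ := by
    rw [hwdef]; simp [inner_add_left, real_inner_smul_left]
  have hwsub : ⟪h - w, x - unext⟫ = ⟪h, x - unext⟫ - ⟪w, x - unext⟫ := inner_sub_left _ _ _
  have hhx := hδ x hx
  have key : α * ψ unext + (1 + A * μ + A * m) * breg d Dd uk unext
      + α * μ * breg d Dd ynext unext - δtk
      + (1 + (A + α) * μ + (A + α) * m) * breg d Dd unext x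
      ≤ α * ψ x + (1 + A * μ + A * m) * breg d Dd uk x + α * μ * breg d Dd ynext x := by
    linarith [hstr', tp1, tp2, hwx, hwsub, hhx]
  -- quadratic-norm estimate
  have hxy : xnext - ynext = ((A + α)⁻¹ * α) • (unext - uk) := by
    rw [hxnext, hynext]; module
  have hnorm : ‖xnext - ynext‖ ^ 2 = ((A + α)⁻¹ * α) ^ 2 * ‖unext - uk‖ ^ 2 := by
    rw [hxy, norm_smul, mul_pow, Real.norm_eq_abs, sq_abs]
  have heq : (A + α) * (Lc / 2 * ‖xnext - ynext‖ ^ 2)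
      = (1 + A * μ + A * m) * (1 / 2 * ‖unext - uk‖ ^ 2) := by
    rw [hnorm]
    have hinv : (A + α)⁻¹ * (A + α) = 1 := inv_mul_cancel₀ hAp.ne'
    linear_combination (-(‖unext - uk‖ ^ 2 / 2) * ((A + α)⁻¹) ^ 2 * (A + α)) * hquad
      + ((‖unext - uk‖ ^ 2 / 2) * (1 + A * μ + A * m) * ((A + α)⁻¹ * (A + α) + 1)) * hinv
  have hB : (0:ℝ) ≤ 1 + A * μ + A * m := by
    nlinarith [mul_nonneg hA hμ, mul_nonneg hA hm]
  have key2 : (A + α) * (Lc / 2 * ‖xnext - ynext‖ ^ 2)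
      ≤ (1 + A * μ + A * m) * breg d Dd uk unext := by
    rw [heq]
    exact mul_le_mul_of_nonneg_left (hsc unext huQ uk huk) hB
  -- convexity of ψ at xnext
  have hψc : (A + α) * ψ xnext ≤ α * ψ unext + A * ψ xk := by
    have h6 : ψ xnext ≤ ((A + α)⁻¹ * α) * ψ unext + ((A + α)⁻¹ * A) * ψ xk := by
      rw [hxc]; exact hψ_conv.2 huQ hxk w1 w2 hsum
    have e1 : (A + α) * ((A + α)⁻¹ * α) = α := by field_simp
    have e2 : (A + α) * ((A + α)⁻¹ * A) = A := by field_simp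
    calc (A + α) * ψ xnext
        ≤ (A + α) * (((A + α)⁻¹ * α) * ψ unext + ((A + α)⁻¹ * A) * ψ xk) :=
          mul_le_mul_of_nonneg_left h6 hAp.le
      _ = ((A + α) * ((A + α)⁻¹ * α)) * ψ unext + ((A + α) * ((A + α)⁻¹ * A)) * ψ xk := by ring
      _ = α * ψ unext + A * ψ xk := by rw [e1, e2]
  -- model inequalities
  have hVxk : 0 ≤ breg d Dd ynext xk := le_trans (by positivity) (hsc xk hxk ynext hyQ)
  have hVun : 0 ≤ breg d Dd ynext unext := le_trans (by positivity) (hsc unext huQ ynext hyQ)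
  have haxs : α * (μ * breg d Dd ynext x) ≤ α * (f x - c - ψ x) :=
    mul_le_mul_of_nonneg_left (ha x hx) hα.le
  have haxks : A * (μ * breg d Dd ynext xk) ≤ A * (f xk - c - ψ xk) :=
    mul_le_mul_of_nonneg_left (ha xk hxk) hA
  have hnn1 : 0 ≤ A * (μ * breg d Dd ynext xk) := mul_nonneg hA (mul_nonneg hμ hVxk)
  have hnn2 : 0 ≤ α * μ * breg d Dd ynext unext := mul_nonneg (mul_nonneg hα.le hμ) hVun
  have hc1s : (A + α) * f xnext ≤ (A + α) * (cp + δk) :=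
    mul_le_mul_of_nonneg_left hc1 hAp.le
  have hc2s : (A + α) * cp
      ≤ (A + α) * (c + ψ xnext + Lc / 2 * ‖xnext - ynext‖ ^ 2 + δk) :=
    mul_le_mul_of_nonneg_left hc2 hAp.le
  linarith [hc1s, hc2s, hψc, key2, key, haxs, haxks, hnn1, hnn2]
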